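/- Let G be a splittable, f-closed directed graph and let C be a sink of the strict partial order <⊕ on source-equivalence classes of inconsistent edges. Then C⁺ = C^⊕, i.e., ⋂_{R∈C} u_R^{+,R} = ⋂_{R∈C} u_R^⊕. -/

import Mathlib

namespace CQA

variable {V : Type*}

/-- Directed reachability along edges in `A`. -/
def reach (A : Set (V × V)) (u v : V) : Prop :=
  Relation.ReflTransGen (fun x y => (x, y) ∈ A) u v

/-- `u` and `v` are in the same strongly connected component of the graph with edges `E`. -/
def sameSCC (E : Set (V × V)) (u v : V) : Prop := reach E u v ∧ reach E v u

/-- There is an undirected path in `E` from `a` to `b` all of whose vertices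
(including the endpoints) avoid the set `A`. -/
def ureach (E : Set (V × V)) (A : Set V) (a b : V) : Prop :=
  a ∉ A ∧ Relation.ReflTransGen (fun x y => ((x, y) ∈ E ∨ (y, x) ∈ E) ∧ y ∉ A) a b

/-- `u_R^{+,R}`: vertices reachable from the source of `R` in `G − {R}`. -/
def uplus (E : Set (V × V)) (R : V × V) : Set V := {v | reach (E \ {R}) R.1 v}

/-- `u^⊕`: vertices reachable from `u` using only consistent edges `Ec`. -/
def uoplus (Ec : Set (V × V)) (u : V) : Set V := {v | reach Ec u v}

/-- `C` is a source-equivalence class of inconsistent edges `Ei`. -/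
def IsClass (E Ei : Set (V × V)) (C : Set (V × V)) : Prop :=
  ∃ R ∈ Ei, C = {S ∈ Ei | sameSCC E R.1 S.1}

/-- `C^⊕ = ⋂_{R ∈ C} u_R^⊕`. -/
def Coplus (Ec : Set (V × V)) (C : Set (V × V)) : Set V :=
  {v | ∀ R ∈ C, v ∈ uoplus Ec R.1}

/-- `C⁺ = ⋂_{R ∈ C} u_R^{+,R}`. -/
def Cplus (E : Set (V × V)) (C : Set (V × V)) : Set V :=
  {v | ∀ R ∈ C, v ∈ uplus E R}

/-- `C₁ ≤⊕ C₂` iff some `S ∈ C₂` has `u_S ∈ C₁^⊕`. -/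
def leOplus (Ec : Set (V × V)) (C₁ C₂ : Set (V × V)) : Prop :=
  ∃ S ∈ C₂, S.1 ∈ Coplus Ec C₁

/-- The strict order `C₁ <⊕ C₂`. -/
def ltOplus (Ec : Set (V × V)) (C₁ C₂ : Set (V × V)) : Prop :=
  leOplus Ec C₁ C₂ ∧ C₁ ≠ C₂

/-- A sink: a maximal element of `<⊕` among source-equivalence classes. -/
def IsSink (E Ei Ec : Set (V × V)) (C : Set (V × V)) : Prop :=
  IsClass E Ei C ∧ ∀ C', IsClass E Ei C' → ¬ ltOplus Ec C C'

/-- `C' ∈ coupled⊕(C)`. -/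
def coupledOplusCl (E Ec : Set (V × V)) (C C' : Set (V × V)) : Prop :=
  C' = C ∨ ∃ R ∈ C, ∃ S ∈ C', ureach E (Coplus Ec C) R.2 S.1

/-- `C' ∈ coupled⁺(C)`. -/
def coupledPlusCl (E : Set (V × V)) (C C' : Set (V × V)) : Prop :=
  C' = C ∨ ∃ R ∈ C, ∃ S ∈ C', ureach E (Cplus E C) R.2 S.1

/-- `S ∈ coupled⁺(R)` for inconsistent edges `R, S`:
either `S ∈ [R]`, or there is an undirected path `v_R ↔ u_S` avoiding `u_R^{+,R}`. -/
def coupledPlusEdge (E Ei : Set (V × V)) (R S : V × V) : Prop :=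
  S ∈ Ei ∧ (sameSCC E R.1 S.1 ∨ ureach E (uplus E R) R.2 S.1)

/-- `G` is splittable: every coupled pair of inconsistent edges is source-equivalent. -/
def Splittable (E Ec : Set (V × V)) : Prop :=
  ∀ R ∈ E \ Ec, ∀ S ∈ E \ Ec,
    coupledPlusEdge E (E \ Ec) R S → coupledPlusEdge E (E \ Ec) S R → sameSCC E R.1 S.1

/-- `G` is f-closed: for every inconsistent edge `R`,
`v_R^⊕ ∩ u_R^{+,R} ⊆ u_R^⊕`. -/
def FClosed (E Ec : Set (V × V)) : Prop :=
  ∀ R ∈ E \ Ec, ∀ v, v ∈ uoplus Ec R.2 → v ∈ uplus E R → v ∈ uoplus Ec R.1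

end CQA

namespace CQAProof
open CQA

variable {V : Type*}

def Wk (A : Set (V × V)) : V → V → List V → Prop
  | a, b, [] => a = b
  | a, b, c :: l => (a, c) ∈ A ∧ Wk A c b l

lemma wk_reach {A : Set (V × V)} :
    ∀ {l : List V} {a b : V}, Wk A a b l → reach A a b := by
  intro l
  induction l with
  | nil => intro a b h; have hab : a = b := h; subst hab; exact Relation.ReflTransGen.refl
  | cons c l ih =>
    intro a b h
    obtain ⟨h1, h2⟩ := h
    exact Relation.ReflTransGen.head h1 (ih h2)

lemma reach_wk {A : Set (V × V)} {a b : V} (h : reach A a b) : ∃ l, Wk A a b l := by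
  induction h using Relation.ReflTransGen.head_induction_on with
  | refl => exact ⟨[], rfl⟩
  | head hab _ ih =>
    obtain ⟨l, hl⟩ := ih
    exact ⟨_ :: l, hab, hl⟩

lemma wk_first {A : Set (V × V)} (P : V → Prop) :
    ∀ {l : List V} {a b : V}, Wk A a b l → ¬ P a → P b →
      ∃ y z l₁, Wk A a y l₁ ∧ (y, z) ∈ A ∧ ¬ P y ∧ P z ∧ l₁.length < l.length := by
  intro l
  induction l with
  | nil =>
    intro a b h hna hb
    have hab : a = b := h; subst hab
    exact absurd hb hna
  | cons c l ih =>
    intro a b h hna hb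
    obtain ⟨h1, h2⟩ := h
    by_cases hc : P c
    · exact ⟨a, c, [], rfl, h1, hna, hc, by simp⟩
    · obtain ⟨y, z, l₁, g1, g2, g3, g4, g5⟩ := ih h2 hc hb
      exact ⟨y, z, c :: l₁, ⟨h1, g1⟩, g2, g3, g4, by simp; omega⟩

lemma wk_exit {A : Set (V × V)} (Q : V → Prop) :
    ∀ {l : List V} {a b : V}, Wk A a b l → ¬ Q b →
      ((∀ x, x = a ∨ x ∈ l → ¬ Q x) ∨
        ∃ w w' l₁ l₂, Wk A a w l₁ ∧ (w, w') ∈ A ∧ Q w ∧ ¬ Q w' ∧ Wk A w' b l₂ ∧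
          (∀ x, x = w' ∨ x ∈ l₂ → ¬ Q x)) := by
  intro l
  induction l with
  | nil =>
    intro a b h hb
    have hab : a = b := h; subst hab
    refine Or.inl ?_
    rintro x (rfl | hx)
    · exact hb
    · simp at hx
  | cons c l ih =>
    intro a b h hb
    obtain ⟨h1, h2⟩ := h
    rcases ih h2 hb with hall | ⟨w, w', l₁, l₂, g1, g2, g3, g4, g5, g6⟩
    · by_cases ha : Q a
      · exact Or.inr ⟨a, c, [], l, rfl, h1, ha, hall c (Or.inl rfl), h2, hall⟩
      · refine Or.inl ?_
        rintro x (rfl | hx)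
        · exact ha
        · rcases List.mem_cons.mp hx with rfl | hx'
          · exact hall x (Or.inl rfl)
          · exact hall x (Or.inr hx')
    · exact Or.inr ⟨w, w', c :: l₁, l₂, ⟨h1, g1⟩, g2, g3, g4, g5, g6⟩

lemma wk_ufwd {A F : Set (V × V)} {Av : Set V} (hAE : A ⊆ F) :
    ∀ {l : List V} {a b : V}, Wk A a b l → (∀ x, x = a ∨ x ∈ l → x ∉ Av) →
      Relation.ReflTransGen (fun x y => ((x, y) ∈ F ∨ (y, x) ∈ F) ∧ y ∉ Av) a b := by
  intro l
  induction l with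
  | nil =>
    intro a b h _
    have hab : a = b := h; subst hab
    exact Relation.ReflTransGen.refl
  | cons c l ih =>
    intro a b h hx
    obtain ⟨h1, h2⟩ := h
    refine Relation.ReflTransGen.head ⟨Or.inl (hAE h1), hx c (Or.inr (by simp))⟩ (ih h2 ?_)
    rintro x (rfl | hxl)
    · exact hx x (Or.inr (by simp))
    · exact hx x (Or.inr (List.mem_cons_of_mem c hxl))

lemma wk_urev {A F : Set (V × V)} {Av : Set V} (hAE : A ⊆ F) :
    ∀ {l : List V} {a b : V}, Wk A a b l → (∀ x, x = a ∨ x ∈ l → x ∉ Av) →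
      Relation.ReflTransGen (fun x y => ((x, y) ∈ F ∨ (y, x) ∈ F) ∧ y ∉ Av) b a := by
  intro l
  induction l with
  | nil =>
    intro a b h _
    have hab : a = b := h; subst hab
    exact Relation.ReflTransGen.refl
  | cons c l ih =>
    intro a b h hx
    obtain ⟨h1, h2⟩ := h
    refine Relation.ReflTransGen.tail (ih h2 ?_) ⟨Or.inr (hAE h1), hx a (Or.inl rfl)⟩
    rintro x (rfl | hxl)
    · exact hx x (Or.inr (by simp))
    · exact hx x (Or.inr (List.mem_cons_of_mem c hxl))

lemma exit_lemma {E : Set (V × V)} {R : V × V} {x x' : V}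
    (hx : x ∈ uplus E R) (hE : (x, x') ∈ E) (hx' : x' ∉ uplus E R) : (x, x') = R := by
  by_contra hne
  apply hx'
  exact Relation.ReflTransGen.tail hx ⟨hE, fun hmem => hne hmem⟩

lemma sameSCC_refl (E : Set (V × V)) (u : V) : sameSCC E u u :=
  ⟨Relation.ReflTransGen.refl, Relation.ReflTransGen.refl⟩

lemma sameSCC_trans {E : Set (V × V)} {u v w : V}
    (h1 : sameSCC E u v) (h2 : sameSCC E v w) : sameSCC E u w :=
  ⟨h1.1.trans h2.1, h2.2.trans h1.2⟩

/-- If a sink class `C` has an inconsistent edge `h` whose source lies in `C^⊕`, then `h ∈ C`. -/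
lemma sink_star {E Ec : Set (V × V)} {C : Set (V × V)}
    (hsink : IsSink E (E \ Ec) Ec C) {h : V × V} (hEi : h ∈ E \ Ec)
    (hcop : h.1 ∈ Coplus Ec C) : h ∈ C := by
  have hcls : IsClass E (E \ Ec) {S ∈ E \ Ec | sameSCC E h.1 S.1} := ⟨h, hEi, rfl⟩
  have hmem : h ∈ {S ∈ E \ Ec | sameSCC E h.1 S.1} := ⟨hEi, sameSCC_refl E h.1⟩
  have hle : leOplus Ec C {S ∈ E \ Ec | sameSCC E h.1 S.1} := ⟨h, hmem, hcop⟩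
  have hns := hsink.2 _ hcls
  have hCC : C = {S ∈ E \ Ec | sameSCC E h.1 S.1} := by
    by_contra hne
    exact hns ⟨hle, hne⟩
  rw [hCC]
  exact hmem

/-- Backward propagation of consistent reachability into `w ∈ C⁺` along paths in the
source SCC of `C`. -/
lemma propag {E Ec : Set (V × V)} (hf : FClosed E Ec)
    {C : Set (V × V)} {R₀ : V × V}
    (hCeq : C = {S ∈ E \ Ec | sameSCC E R₀.1 S.1})
    {w : V} (hw : w ∈ Cplus E C) {S₁ : V × V} (hS₁ : S₁ ∈ C)
    (hbase : reach Ec S₁.1 w) :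
    ∀ x, reach E x S₁.1 → reach E S₁.1 x → reach Ec x w := by
  intro x hx
  induction hx using Relation.ReflTransGen.head_induction_on with
  | refl => intro _; exact hbase
  | @head a c hac hcb ih =>
    intro hS₁a
    have hS₁c : reach E S₁.1 c := hS₁a.tail hac
    have hcw : reach Ec c w := ih hS₁c
    by_cases hcons : (a, c) ∈ Ec
    · exact Relation.ReflTransGen.head hcons hcw
    · have hT : (a, c) ∈ C := by
        rw [hCeq]
        refine ⟨⟨hac, hcons⟩, ?_⟩
        have h1 : sameSCC E R₀.1 S₁.1 := by
          rw [hCeq] at hS₁; exact hS₁.2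
        exact sameSCC_trans h1 ⟨hS₁a, Relation.ReflTransGen.head hac hcb⟩
      exact hf (a, c) ⟨hac, hcons⟩ w hcw (hw _ hT)

/-- The consistent path from `z = v_h` to `τ` avoids `u_h^{+,h}`. -/
lemma cons_avoid {E Ec : Set (V × V)} (hEc : Ec ⊆ E) (hf : FClosed E Ec)
    {y z τ : V} (hEi : (y, z) ∈ E \ Ec) (hyτ : ¬ reach Ec y τ) :
    ∀ {l : List V} {x : V}, Wk Ec x τ l → reach Ec z x →
      x ∉ uplus E (y, z) ∧
        Relation.ReflTransGen
          (fun p q => ((p, q) ∈ E ∨ (q, p) ∈ E) ∧ q ∉ uplus E (y, z)) x τ := by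
  intro l
  induction l with
  | nil =>
    intro x h hzx
    have hxτ : x = τ := h; subst hxτ
    refine ⟨fun hA => hyτ (hf (y, z) hEi x hzx hA), Relation.ReflTransGen.refl⟩
  | cons c l ih =>
    intro x h hzx
    have hW : reach Ec x τ := wk_reach h
    obtain ⟨h1, h2⟩ := h
    obtain ⟨hcA, hcR⟩ := ih h2 (hzx.tail h1)
    have hxA : x ∉ uplus E (y, z) := by
      intro hA
      have hyx : reach Ec y x := hf (y, z) hEi x hzx hA
      exact hyτ (hyx.trans hW)
    exact ⟨hxA, Relation.ReflTransGen.head ⟨Or.inl (hEc h1), hcA⟩ hcR⟩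


/-- Main descent: no vertex reachable from `u_{R₀}` avoiding `R₀` lies in `C⁺ \ C^⊕`. -/
lemma main_descent {E Ec : Set (V × V)} (hEc : Ec ⊆ E) (hsp : Splittable E Ec)
    (hf : FClosed E Ec) {C : Set (V × V)} (hsink : IsSink E (E \ Ec) Ec C)
    {R₀ : V × V} (hR₀ : R₀ ∈ E \ Ec)
    (hCeq : C = {S ∈ E \ Ec | sameSCC E R₀.1 S.1}) :
    ∀ n (l : List V) (τ : V), l.length ≤ n → Wk (E \ {R₀}) R₀.1 τ l →
      τ ∈ Cplus E C → τ ∉ Coplus Ec C → False := by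
  have hR₀C : R₀ ∈ C := by rw [hCeq]; exact ⟨hR₀, sameSCC_refl E R₀.1⟩
  -- reusable: if u_{R₀} consistently reaches τ ∈ C⁺ then τ ∈ C^⊕.
  have hprop : ∀ τ : V, τ ∈ Cplus E C → reach Ec R₀.1 τ → τ ∈ Coplus Ec C := by
    intro τ hτp hreach S' hS'
    have h1 : sameSCC E R₀.1 S'.1 := by rw [hCeq] at hS'; exact hS'.2
    exact propag hf hCeq hτp hR₀C hreach S'.1 h1.2 h1.1
  intro n
  induction n with
  | zero =>
    intro l τ hlen hwk hτp hτc
    have hl0 : l = [] := List.eq_nil_of_length_eq_zero (Nat.le_zero.mp hlen)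
    subst hl0
    have hττ : R₀.1 = τ := hwk
    exact hτc (hprop τ hτp (hττ ▸ Relation.ReflTransGen.refl))
  | succ n ih =>
    intro l τ hlen hwk hτp hτc
    have hPstart : ¬ reach Ec R₀.1 τ := fun hr => hτc (hprop τ hτp hr)
    obtain ⟨y, z, l₁, hwk₁, hyz, hPy, hPz, hlt⟩ :=
      wk_first (fun x => reach Ec x τ) hwk hPstart Relation.ReflTransGen.refl
    have hyzE : (y, z) ∈ E := hyz.1
    have hEi : (y, z) ∈ E \ Ec :=
      ⟨hyzE, fun hc => hPy (Relation.ReflTransGen.head hc hPz)⟩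
    -- consistent path z → τ avoids A_h, and z ∉ A_h
    obtain ⟨lz, hlz⟩ := reach_wk hPz
    obtain ⟨hznA, hzRTG⟩ := cons_avoid hEc hf hEi hPy hlz Relation.ReflTransGen.refl
    have hτA : τ ∉ uplus E (y, z) := fun hA => hPy (hf (y, z) hEi τ hPz hA)
    have hnotC : (y, z) ∉ C := fun hC => hτA (hτp _ hC)
    by_cases hcase : ∀ S'' ∈ C, y ∈ uplus E S''
    · -- CASE II : recurse on the strictly shorter prefix
      have hyCp : y ∈ Cplus E C := fun S'' hS'' => hcase S'' hS''
      have hyCo : y ∉ Coplus Ec C := fun hco => hnotC (sink_star hsink hEi hco)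
      exact ih l₁ y (by omega) hwk₁ hyCp hyCo
    · -- CASE I : splittable violation
      push_neg at hcase
      obtain ⟨S'', hS''C, hyA⟩ := hcase
      have hS''Ei : S'' ∈ E \ Ec := by rw [hCeq] at hS''C; exact hS''C.1
      have hS''scc : sameSCC E R₀.1 S''.1 := by rw [hCeq] at hS''C; exact hS''C.2
      have hcpe1 : coupledPlusEdge E (E \ Ec) S'' (y, z) := by
        refine ⟨hEi, Or.inr ?_⟩
        rcases wk_exit (fun x => x ∈ uplus E S'') hwk₁ hyA with
          hall | ⟨w, w', p₁, p₂, hwkp₁, hww', hQw, hQw', hwkp₂, hall₂⟩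
        · -- the whole prefix avoids A_{S''} : route via the SCC path u_{S''} → u_{R₀}
          obtain ⟨lp, hlp⟩ := reach_wk hS''scc.2
          rcases wk_exit (fun x => x ∈ uplus E S'') hlp (hall R₀.1 (Or.inl rfl)) with
            hall' | ⟨w, w', p₁, p₂, _, hww', hQw, hQw', hwkp₂, hall₂⟩
          · exact absurd (show S''.1 ∈ uplus E S'' from Relation.ReflTransGen.refl)
              (hall' S''.1 (Or.inl rfl))
          · have heq : (w, w') = S'' := exit_lemma hQw hww' hQw'
            have hw' : w' = S''.2 := congrArg Prod.snd heq
            subst hw'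
            refine ⟨hQw', ?_⟩
            have part1 := wk_ufwd (subset_rfl) hwkp₂ hall₂
            have part2 := wk_ufwd (Set.diff_subset) hwk₁ hall
            exact part1.trans part2
        · have heq : (w, w') = S'' := exit_lemma hQw hww'.1 hQw'
          have hw' : w' = S''.2 := congrArg Prod.snd heq
          subst hw'
          exact ⟨hQw', wk_ufwd (Set.diff_subset) hwkp₂ hall₂⟩
      have hcpe2 : coupledPlusEdge E (E \ Ec) (y, z) S'' := by
        refine ⟨hS''Ei, Or.inr ?_⟩
        obtain ⟨lq, hlq⟩ := reach_wk (hτp S'' hS''C)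
        rcases wk_exit (fun x => x ∈ uplus E (y, z)) hlq hτA with
          hall | ⟨w, w', q₁, q₂, hwkq₁, hww', hQw, hQw', _, _⟩
        · have hrev := wk_urev (Set.diff_subset) hlq hall
          refine ⟨hznA, hzRTG.trans ?_⟩
          have hstart : S''.1 ∉ uplus E (y, z) := hall S''.1 (Or.inl rfl)
          exact hrev
        · have heq : (w, w') = (y, z) := exit_lemma hQw hww'.1 hQw'
          have hwy : w = y := congrArg Prod.fst heq
          exact absurd (show y ∈ uplus E S'' from hwy ▸ wk_reach hwkq₁) hyA
      have hscc := hsp S'' hS''Ei (y, z) hEi hcpe1 hcpe2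
      have hyC : (y, z) ∈ C := by
        rw [hCeq]
        exact ⟨hEi, sameSCC_trans hS''scc hscc⟩
      exact hnotC hyC

end CQAProof


open CQA in
/-- for a sink C of a splittable f-closed graph, C⁺ = C^⊕. -/
theorem stmt_14 {V : Type*} [Fintype V] (E Ec : Set (V × V)) (hEc : Ec ⊆ E)
    (hsp : Splittable E Ec) (hf : FClosed E Ec)
    (C : Set (V × V)) (hsink : IsSink E (E \ Ec) Ec C) :
    Cplus E C = Coplus Ec C := by
  obtain ⟨R₀, hR₀, hCeq⟩ := hsink.1
  ext v
  constructor
  · intro hv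
    by_contra hvc
    have hR₀C : R₀ ∈ C := by rw [hCeq]; exact ⟨hR₀, CQAProof.sameSCC_refl E R₀.1⟩
    obtain ⟨l, hl⟩ := CQAProof.reach_wk (hv R₀ hR₀C)
    exact CQAProof.main_descent hEc hsp hf hsink hR₀ hCeq l.length l v le_rfl hl hv hvc
  · intro hv R hR
    have hRC : reach Ec R.1 v := hv R hR
    have hRnc : R ∈ E \ Ec := by rw [hCeq] at hR; exact hR.1
    refine Relation.ReflTransGen.mono ?_ _ _ hRC
    intro a b hab
    exact ⟨hEc hab, fun he => hRnc.2 ((show (a, b) = R from he) ▸ hab)⟩
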